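/- (Chaplygin sleigh on an inclined plane.) Consider the Chaplygin sleigh system on ℝ⁵ with potential U = mμ(x + a cos φ), μ > 0: m v̇₁ = m a ω² − mμ cos φ, (I+ma²) ω̇ = −m a ω v₁ + mμ a sin φ, ẋ = v₁ cos φ, ẏ = v₁ sin φ, φ̇ = ω, with energy E = ½(m v₁² + (I+ma²) ω²) + mμ(x + a cos φ). Then: (i) E is a first integral, ⟨v, ∇E⟩ = 0; (ii) u_x = ∂/∂x is a symmetry field, [v, u_x] = 0; (iii) ⟨u_x, ∇E⟩ = mμ everywhere; consequently the system is Hamiltonian with the rank-2 bracket J⁽²⁾ = v∧u_x: J⁽²⁾(p)·∇E(p) = mμ·v(p) for every p ∈ ℝ⁵. -/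

import Mathlib

/-- The Chaplygin sleigh on an inclined plane: the system on ℝ⁵, coordinates
`p = (v₁, ω, x, y, φ)`, parameters `m, I, a > 0` and slope parameter `μ > 0`, with potential
`U = mμ(x + a cos φ)`:
`m v̇₁ = m a ω² − mμ cos φ`, `(I+ma²) ω̇ = −m a ω v₁ + mμ a sin φ`,
`ẋ = v₁ cos φ`, `ẏ = v₁ sin φ`, `φ̇ = ω`. -/
noncomputable def sleighInc (m I a μ : ℝ) (p : Fin 5 → ℝ) : Fin 5 → ℝ :=
  ![a * (p 1) ^ 2 - μ * Real.cos (p 4),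
    (-(m * a * (p 1) * (p 0)) + m * μ * a * Real.sin (p 4)) / (I + m * a ^ 2),
    (p 0) * Real.cos (p 4),
    (p 0) * Real.sin (p 4),
    p 1]

/-- The energy of the Chaplygin sleigh on an inclined plane:
`E = ½(m v₁² + (I+ma²) ω²) + mμ(x + a cos φ)`. -/
noncomputable def sleighIncE (m I a μ : ℝ) (p : Fin 5 → ℝ) : ℝ :=
  (1 / 2) * (m * (p 0) ^ 2 + (I + m * a ^ 2) * (p 1) ^ 2)
    + m * μ * (p 2 + a * Real.cos (p 4))

/-- The wedge of two vector fields: `(v ∧ u)_ij = v_i u_j − v_j u_i`. -/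
noncomputable def wedge {n : ℕ} (v u : (Fin n → ℝ) → (Fin n → ℝ)) (x : Fin n → ℝ) :
    Matrix (Fin n) (Fin n) ℝ :=
  Matrix.of fun i j => v x i * u x j - v x j * u x i

/-- The gradient of a scalar function on ℝⁿ, as the vector of partial derivatives. -/
noncomputable def grad {n : ℕ} (F : (Fin n → ℝ) → ℝ) (x : Fin n → ℝ) : Fin n → ℝ :=
  fun j => fderiv ℝ F x (Pi.single j 1)


private noncomputable abbrev sleighPr (i : Fin 5) : (Fin 5 → ℝ) →L[ℝ] ℝ := ContinuousLinearMap.proj i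

private lemma sleighHproj (i : Fin 5) (p : Fin 5 → ℝ) :
    HasFDerivAt (fun q : Fin 5 → ℝ => q i) (sleighPr i) p :=
  (sleighPr i).hasFDerivAt

lemma sleighIncE_fderiv_apply (m I a μ : ℝ) (p w : Fin 5 → ℝ) :
    fderiv ℝ (sleighIncE m I a μ) p w =
      m * p 0 * w 0 + (I + m * a ^ 2) * p 1 * w 1 + m * μ * w 2
        - m * μ * a * Real.sin (p 4) * w 4 := by
  have h0 := sleighHproj 0 p
  have h1 := sleighHproj 1 p
  have h2 := sleighHproj 2 p
  have h4 := sleighHproj 4 p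
  have hcos : HasFDerivAt (fun q : Fin 5 → ℝ => Real.cos (q 4)) ((-Real.sin (p 4)) • (sleighPr 4)) p :=
    by have := (Real.hasDerivAt_cos (p 4)).comp_hasFDerivAt p h4; exact this
  have heq : sleighIncE m I a μ = fun q : Fin 5 → ℝ =>
      (1 / 2) * (m * (q 0 * q 0) + (I + m * a ^ 2) * (q 1 * q 1))
        + m * μ * (q 2 + a * Real.cos (q 4)) := by
    funext q; simp only [sleighIncE]; ring
  rw [heq]
  have hE := ((((h0.mul h0).const_mul m).add ((h1.mul h1).const_mul (I + m * a ^ 2))).const_mul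
    ((1 : ℝ) / 2)).add ((h2.add (hcos.const_mul a)).const_mul (m * μ))
  rw [show fderiv ℝ (fun q : Fin 5 → ℝ =>
        (1 / 2) * (m * (q 0 * q 0) + (I + m * a ^ 2) * (q 1 * q 1))
          + m * μ * (q 2 + a * Real.cos (q 4))) p = _ from hE.fderiv]
  simp [sleighPr]
  ring

lemma sleighInc_fderiv_dir (m I a μ : ℝ) (p w : Fin 5 → ℝ) :
    fderiv ℝ (sleighInc m I a μ) p w =
      ![2 * a * p 1 * w 1 + μ * Real.sin (p 4) * w 4,
        (-(m * a * (p 1 * w 0 + p 0 * w 1)) + m * μ * a * Real.cos (p 4) * w 4) / (I + m * a ^ 2),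
        w 0 * Real.cos (p 4) - p 0 * Real.sin (p 4) * w 4,
        w 0 * Real.sin (p 4) + p 0 * Real.cos (p 4) * w 4,
        w 1] := by
  have h0 := sleighHproj 0 p
  have h1 := sleighHproj 1 p
  have h4 := sleighHproj 4 p
  have hcos : HasFDerivAt (fun q : Fin 5 → ℝ => Real.cos (q 4)) ((-Real.sin (p 4)) • (sleighPr 4)) p :=
    by have := (Real.hasDerivAt_cos (p 4)).comp_hasFDerivAt p h4; exact this
  have hsin : HasFDerivAt (fun q : Fin 5 → ℝ => Real.sin (q 4)) ((Real.cos (p 4)) • (sleighPr 4)) p :=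
    by have := (Real.hasDerivAt_sin (p 4)).comp_hasFDerivAt p h4; exact this
  have e0 : (fun q : Fin 5 → ℝ => sleighInc m I a μ q 0)
      = fun q : Fin 5 → ℝ => a * (q 1 * q 1) - μ * Real.cos (q 4) := by
    funext q; simp only [sleighInc, Matrix.cons_val_zero]; ring
  have e1 : (fun q : Fin 5 → ℝ => sleighInc m I a μ q 1)
      = fun q : Fin 5 → ℝ =>
        (1 / (I + m * a ^ 2)) * ((m * a) * (q 1 * q 0) * (-1) + (m * μ * a) * Real.sin (q 4)) := by
    funext q; simp only [sleighInc, Matrix.cons_val_one, Matrix.head_cons, Matrix.cons_val_zero]; ring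
  have e2 : (fun q : Fin 5 → ℝ => sleighInc m I a μ q 2)
      = fun q : Fin 5 → ℝ => q 0 * Real.cos (q 4) := by
    funext q; simp [sleighInc]
  have e3 : (fun q : Fin 5 → ℝ => sleighInc m I a μ q 3)
      = fun q : Fin 5 → ℝ => q 0 * Real.sin (q 4) := by
    funext q; simp [sleighInc]
  have e4 : (fun q : Fin 5 → ℝ => sleighInc m I a μ q 4)
      = fun q : Fin 5 → ℝ => q 1 := by
    funext q; simp [sleighInc]
  have hf0 := ((h1.mul h1).const_mul a).sub (hcos.const_mul μ)
  have hf1 := ((((h1.mul h0).const_mul (m * a)).mul_const (-1)).add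
    (hsin.const_mul (m * μ * a))).const_mul (1 / (I + m * a ^ 2))
  have hf2 := h0.mul hcos
  have hf3 := h0.mul hsin
  have hf4 := h1
  have hdiff : ∀ i : Fin 5, DifferentiableAt ℝ (fun q => sleighInc m I a μ q i) p := by
    intro i
    fin_cases i
    · exact e0 ▸ hf0.differentiableAt
    · exact e1 ▸ hf1.differentiableAt
    · exact e2 ▸ hf2.differentiableAt
    · exact e3 ▸ hf3.differentiableAt
    · exact e4 ▸ hf4.differentiableAt
  have hpi := fderiv_pi (𝕜 := ℝ) (φ := fun i (q : Fin 5 → ℝ) => sleighInc m I a μ q i) (x := p) hdiff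
  rw [show sleighInc m I a μ = (fun x i => sleighInc m I a μ x i) from rfl, hpi]
  funext i
  rw [ContinuousLinearMap.pi_apply]
  fin_cases i
  · show fderiv ℝ (fun q : Fin 5 → ℝ => sleighInc m I a μ q 0) p w = _
    rw [e0, show fderiv ℝ (fun q : Fin 5 → ℝ => a * (q 1 * q 1) - μ * Real.cos (q 4)) p = _ from hf0.fderiv]
    show _ = 2 * a * p 1 * w 1 + μ * Real.sin (p 4) * w 4
    simp [sleighPr]; ring
  · show fderiv ℝ (fun q : Fin 5 → ℝ => sleighInc m I a μ q 1) p w = _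
    rw [e1, show fderiv ℝ (fun q : Fin 5 → ℝ =>
          (1 / (I + m * a ^ 2)) * ((m * a) * (q 1 * q 0) * (-1) + (m * μ * a) * Real.sin (q 4))) p = _ from hf1.fderiv]
    show _ = (-(m * a * (p 1 * w 0 + p 0 * w 1)) + m * μ * a * Real.cos (p 4) * w 4) / (I + m * a ^ 2)
    simp [sleighPr]; ring
  · show fderiv ℝ (fun q : Fin 5 → ℝ => sleighInc m I a μ q 2) p w = _
    rw [e2, show fderiv ℝ (fun q : Fin 5 → ℝ => q 0 * Real.cos (q 4)) p = _ from hf2.fderiv]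
    show _ = w 0 * Real.cos (p 4) - p 0 * Real.sin (p 4) * w 4
    simp [sleighPr]; ring
  · show fderiv ℝ (fun q : Fin 5 → ℝ => sleighInc m I a μ q 3) p w = _
    rw [e3, show fderiv ℝ (fun q : Fin 5 → ℝ => q 0 * Real.sin (q 4)) p = _ from hf3.fderiv]
    show _ = w 0 * Real.sin (p 4) + p 0 * Real.cos (p 4) * w 4
    simp [sleighPr]; ring
  · show fderiv ℝ (fun q : Fin 5 → ℝ => sleighInc m I a μ q 4) p w = _
    rw [e4, hf4.fderiv]
    show _ = w 1
    simp [sleighPr]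

/-- **Chaplygin sleigh on an inclined plane.** For the sleigh with potential
`U = mμ(x + a cos φ)`: (i) the energy `E` is a first integral; (ii) `u_x = ∂/∂x` is a symmetry
field; (iii) `⟨u_x, ∇E⟩ = mμ` everywhere; consequently the system is Hamiltonian with the
rank-2 bracket `J⁽²⁾ = v ∧ u_x`: `J⁽²⁾(p)·∇E(p) = mμ·v(p)` for every `p ∈ ℝ⁵`. -/
theorem sleigh_inclined_hamiltonization
    (m I a μ : ℝ) (hm : 0 < m) (hI : 0 < I) (ha : 0 < a) (hμ : 0 < μ) :
    (∀ p : Fin 5 → ℝ, fderiv ℝ (sleighIncE m I a μ) p (sleighInc m I a μ p) = 0) ∧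
    (∀ p : Fin 5 → ℝ,
      VectorField.lieBracket ℝ (sleighInc m I a μ) (fun _ => ![0, 0, 1, 0, 0]) p = 0) ∧
    (∀ p : Fin 5 → ℝ, fderiv ℝ (sleighIncE m I a μ) p ![0, 0, 1, 0, 0] = m * μ) ∧
    (∀ p : Fin 5 → ℝ,
      (wedge (sleighInc m I a μ) (fun _ => ![0, 0, 1, 0, 0]) p).mulVec
          (grad (sleighIncE m I a μ) p)
        = (m * μ) • sleighInc m I a μ p) := by
  have hc : (I + m * a ^ 2) ≠ 0 := by positivity
  refine ⟨?_, ?_, ?_, ?_⟩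
  · intro p
    rw [sleighIncE_fderiv_apply]
    simp only [sleighInc, Matrix.cons_val_zero, Matrix.cons_val_one, Matrix.head_cons,
      Matrix.cons_val_two, Matrix.tail_cons, Matrix.cons_val_three, Matrix.cons_val_four]
    field_simp
    ring
  · intro p
    rw [VectorField.lieBracket]
    have hconst : fderiv ℝ (fun _ : Fin 5 → ℝ => (![0, 0, 1, 0, 0] : Fin 5 → ℝ)) p = 0 :=
      fderiv_const_apply _
    rw [hconst]
    simp only [ContinuousLinearMap.zero_apply, zero_sub, neg_eq_zero]
    rw [sleighInc_fderiv_dir]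
    funext i
    fin_cases i <;> simp
  · intro p
    rw [sleighIncE_fderiv_apply]
    simp
  · intro p
    funext i
    have hg : ∀ j : Fin 5, grad (sleighIncE m I a μ) p j =
        ![m * p 0, (I + m * a ^ 2) * p 1, m * μ, 0, -(m * μ * a * Real.sin (p 4))] j := by
      intro j
      rw [grad, sleighIncE_fderiv_apply]
      fin_cases j <;> simp [Pi.single_apply]
    simp only [Matrix.mulVec, dotProduct, Fin.sum_univ_five, wedge, Matrix.of_apply,
      hg]
    fin_cases i <;>
      simp only [sleighInc, Pi.smul_apply, smul_eq_mul, Matrix.cons_val_zero,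
        Matrix.cons_val_one, Matrix.head_cons, Matrix.cons_val_two, Matrix.tail_cons,
        Matrix.cons_val_three, Matrix.cons_val_four, Matrix.cons_val_fin_one] <;>
      field_simp <;> ring
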